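/- Let p be an odd prime, r₁, r₂, m integers with p ∤ r₁ r₂ m, and r₀ ≡ 0 (mod p). Then ∑_{y,z ∈ (ℤ/p)^×} (z/p) e((r₀ z̄ − r₁ y z̄ + r₂ m ȳ)/p) = (r₂m/p)(−r₁/p) · ε_p² · p, where ε_p = 1 if p ≡ 1 (mod 4) and ε_p = i otherwise. In particular its absolute value equals p. -/

import Mathlib

/-- `e(x) = exp(2πix)` -/
noncomputable def e (x : ℝ) : ℂ := Complex.exp (2 * Real.pi * Complex.I * x)

lemma e_add (x y : ℝ) : e (x + y) = e x * e y := by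
  rw [e, e, e, ← Complex.exp_add]; push_cast; ring_nf

lemma e_int (n : ℤ) : e n = 1 := by
  rw [e]
  have : 2 * (Real.pi : ℂ) * Complex.I * ((n : ℝ) : ℂ)
      = (n : ℂ) * (2 * Real.pi * Complex.I) := by push_cast; ring
  rw [this, Complex.exp_int_mul_two_pi_mul_I]

lemma e_pow (x : ℝ) (n : ℕ) : e x ^ n = e (n * x) := by
  rw [e, e, ← Complex.exp_nat_mul]; push_cast; ring_nf

lemma e_int_add (x : ℝ) (n : ℤ) : e (x + n) = e x := by
  rw [e_add, e_int, mul_one]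

section main
variable (p : ℕ) [Fact p.Prime]

lemma hζp : (e (1 / p)) ^ p = 1 := by
  have hp : (p : ℝ) ≠ 0 := Nat.cast_ne_zero.mpr (Fact.out (p := p.Prime)).ne_zero
  rw [e_pow, mul_one_div, div_self hp, show (1 : ℝ) = ((1 : ℤ) : ℝ) by norm_num, e_int]

/-- the standard additive character -/
noncomputable def psi : AddChar (ZMod p) ℂ := AddChar.zmodChar p (hζp p)

lemma psi_prim : (psi p).IsPrimitive := by
  apply AddChar.zmodChar_primitive_of_primitive_root
  have := Complex.isPrimitiveRoot_exp p (Fact.out (p := p.Prime)).ne_zero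
  convert this using 2
  rw [e]; push_cast; ring_nf

lemma psi_int (a : ℤ) : psi p ((a : ZMod p)) = e ((a : ℝ) / p) := by
  have hp : (p : ℝ) ≠ 0 := Nat.cast_ne_zero.mpr (Fact.out (p := p.Prime)).ne_zero
  have h1 : psi p ((a : ZMod p)) = e ((((a : ZMod p).val : ℕ) : ℝ) / p) := by
    rw [psi, AddChar.zmodChar_apply, e_pow, mul_one_div]
  have h2 : (p : ℤ) ∣ a - ((a : ZMod p).val : ℤ) := by
    rw [← ZMod.intCast_zmod_eq_zero_iff_dvd]
    push_cast
    simp [ZMod.natCast_val, ZMod.cast_id]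
  obtain ⟨k, hk⟩ := h2
  have ha : (a : ℝ) / p = (((a : ZMod p).val : ℕ) : ℝ) / p + (k : ℤ) := by
    have : (a : ℝ) = ((a : ZMod p).val : ℝ) + p * k := by
      have := congrArg (fun z : ℤ => (z : ℝ)) hk
      push_cast at this ⊢
      linarith
    rw [this]; field_simp
  rw [h1, ha, e_int_add]

/-- the quadratic character with values in ℂ -/
noncomputable def chi : MulChar (ZMod p) ℂ :=
  (quadraticChar (ZMod p)).ringHomComp (Int.castRingHom ℂ)

lemma chi_legendre (a : ℤ) : chi p ((a : ZMod p)) = (legendreSym p a : ℂ) := by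
  simp [chi, legendreSym, MulChar.ringHomComp_apply]

lemma chi_quadratic : (chi p).IsQuadratic :=
  (quadraticChar_isQuadratic _).comp _

lemma chi_ne_one (hp : Odd p) : chi p ≠ 1 := by
  refine (MulChar.ringHomComp_ne_one_iff Int.cast_injective).mpr (quadraticChar_ne_one ?_)
  rw [ZMod.ringChar_zmod_n]
  rintro rfl
  exact (by norm_num : ¬ Odd 2) hp

lemma chi_sq_eq_one {a : ZMod p} (ha : a ≠ 0) : chi p a * chi p a = 1 := by
  rcases chi_quadratic p a with h | h | h
  · exfalso
    apply ha
    have : ((quadraticChar (ZMod p) a : ℤ) : ℂ) = 0 := h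
    have h0 : quadraticChar (ZMod p) a = 0 := by exact_mod_cast this
    exact quadraticChar_eq_zero_iff.mp h0
  · rw [h]; norm_num
  · rw [h]; norm_num

lemma sum_chi_psi {a : ZMod p} (ha : a ≠ 0) :
    ∑ v : ZMod p, chi p v * psi p (a * v) = chi p a * gaussSum (chi p) (psi p) := by
  have hu : IsUnit a := isUnit_iff_ne_zero.mpr ha
  have key := gaussSum_mulShift (chi p) (psi p) hu.unit
  have hsum : gaussSum (chi p) (AddChar.mulShift (psi p) hu.unit)
      = ∑ v : ZMod p, chi p v * psi p (a * v) := by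
    simp [gaussSum, AddChar.mulShift_apply, IsUnit.unit_spec]
  rw [hsum, IsUnit.unit_spec] at key
  calc ∑ v : ZMod p, chi p v * psi p (a * v)
      = (chi p a * chi p a) * ∑ v : ZMod p, chi p v * psi p (a * v) := by
        rw [chi_sq_eq_one p ha, one_mul]
    _ = chi p a * gaussSum (chi p) (psi p) := by rw [mul_assoc, key]

lemma sum_extend (f : ZMod p → ℂ) :
    ∑ v ∈ Finset.univ.filter (fun v : ZMod p => v ≠ 0), chi p v * f v
      = ∑ v : ZMod p, chi p v * f v := by
  apply Finset.sum_filter_of_ne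
  intro x _ hx hx0
  apply hx
  rw [hx0, (chi p).map_nonunit not_isUnit_zero, zero_mul]

lemma sum_inv_reindex (f : ZMod p → ℂ) :
    ∑ v ∈ Finset.univ.filter (fun v : ZMod p => v ≠ 0), chi p v * f v⁻¹
      = ∑ v ∈ Finset.univ.filter (fun v : ZMod p => v ≠ 0), chi p v * f v := by
  apply Finset.sum_nbij' (i := fun v : ZMod p => v⁻¹) (j := fun v : ZMod p => v⁻¹)
  · intro a ha
    simp only [Finset.mem_filter, Finset.mem_univ, true_and] at ha ⊢
    exact inv_ne_zero ha
  · intro a ha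
    simp only [Finset.mem_filter, Finset.mem_univ, true_and] at ha ⊢
    exact inv_ne_zero ha
  · intro a _; exact inv_inv a
  · intro a _; exact inv_inv a
  · intro a _
    congr 1
    rw [← MulChar.inv_apply' (chi p) a, (chi_quadratic p).inv]

lemma sum_range_coprime (f : ZMod p → ℂ) :
    ∑ y ∈ (Finset.range p).filter (fun y => Nat.gcd y p = 1), f ((y : ℕ) : ZMod p)
      = ∑ u ∈ Finset.univ.filter (fun u : ZMod p => u ≠ 0), f u := by
  have hprime : p.Prime := Fact.out
  haveI : NeZero p := ⟨hprime.ne_zero⟩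
  apply Finset.sum_nbij' (i := fun y : ℕ => ((y : ℕ) : ZMod p)) (j := fun u : ZMod p => u.val)
  · intro a ha
    simp only [Finset.mem_filter, Finset.mem_range] at ha
    simp only [Finset.mem_filter, Finset.mem_univ, true_and]
    intro h0
    have hd : p ∣ a := (ZMod.natCast_eq_zero_iff a p).mp h0
    have : p ∣ Nat.gcd a p := Nat.dvd_gcd hd dvd_rfl
    rw [ha.2] at this
    exact hprime.one_lt.ne' (Nat.eq_one_of_dvd_one this)
  · intro u hu
    simp only [Finset.mem_filter, Finset.mem_univ, true_and] at hu
    simp only [Finset.mem_filter, Finset.mem_range]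
    refine ⟨ZMod.val_lt u, ?_⟩
    have hnd : ¬ p ∣ u.val := by
      intro hd
      have := Nat.eq_zero_of_dvd_of_lt hd (ZMod.val_lt u)
      exact hu (by rwa [ZMod.val_eq_zero] at this)
    have := (Nat.Prime.coprime_iff_not_dvd hprime).mpr hnd
    exact Nat.Coprime.gcd_eq_one (Nat.Coprime.symm this)
  · intro a ha
    simp only [Finset.mem_filter, Finset.mem_range] at ha
    exact ZMod.val_cast_of_lt ha.1
  · intro u _
    simp [ZMod.natCast_val, ZMod.cast_id]
  · intro a _; rfl

end main

/-- Let `p` be an odd prime, `p ∤ r₁ r₂ m`, and `p ∣ r₀`.  Then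
`∑_{y,z ∈ (ℤ/p)ˣ} (z/p) e((r₀ z̄ − r₁ y z̄ + r₂ m ȳ)/p)
  = (r₂ m / p)(−r₁ / p) ε_p² p`, where `ε_p = 1` if `p ≡ 1 (mod 4)` and `ε_p = i`
otherwise; in particular its absolute value equals `p`. -/
theorem twisted_sum_eval (p : ℕ) [Fact p.Prime] (hp : Odd p)
    (r₀ r₁ r₂ m : ℤ) (h : ¬ (p : ℤ) ∣ r₁ * r₂ * m) (h₀ : (p : ℤ) ∣ r₀) :
    (∑ y ∈ (Finset.range p).filter (fun y => Nat.gcd y p = 1),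
      ∑ z ∈ (Finset.range p).filter (fun z => Nat.gcd z p = 1),
        (legendreSym p z : ℂ) *
          e ((((r₀ * (((z : ZMod p)⁻¹).val : ℤ)
              - r₁ * y * (((z : ZMod p)⁻¹).val : ℤ)
              + r₂ * m * (((y : ZMod p)⁻¹).val : ℤ) : ℤ)) : ℝ) / p)) =
      (legendreSym p (r₂ * m) : ℂ) * (legendreSym p (-r₁) : ℂ)
        * (if p % 4 = 1 then 1 else Complex.I) ^ 2 * p ∧
    ‖(∑ y ∈ (Finset.range p).filter (fun y => Nat.gcd y p = 1),
      ∑ z ∈ (Finset.range p).filter (fun z => Nat.gcd z p = 1),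
        (legendreSym p z : ℂ) *
          e ((((r₀ * (((z : ZMod p)⁻¹).val : ℤ)
              - r₁ * y * (((z : ZMod p)⁻¹).val : ℤ)
              + r₂ * m * (((y : ZMod p)⁻¹).val : ℤ) : ℤ)) : ℝ) / p))‖ = p := by
  have hprime : p.Prime := Fact.out
  haveI : NeZero p := ⟨hprime.ne_zero⟩
  have hp2 : p ≠ 2 := by rintro rfl; exact (by norm_num : ¬ Odd 2) hp
  set t := Finset.univ.filter (fun u : ZMod p => u ≠ 0) with ht
  set g := gaussSum (chi p) (psi p) with hg
  have hr₁ : ¬ (p : ℤ) ∣ r₁ := by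
    intro hd
    apply h
    rw [show r₁ * r₂ * m = r₁ * (r₂ * m) by ring]
    exact Dvd.dvd.mul_right hd _
  have hrm : ¬ (p : ℤ) ∣ r₂ * m := by
    intro hd
    apply h
    rw [show r₁ * r₂ * m = (r₂ * m) * r₁ by ring]
    exact Dvd.dvd.mul_right hd _
  set b : ZMod p := ((-r₁ : ℤ) : ZMod p) with hbdef
  set c : ZMod p := ((r₂ * m : ℤ) : ZMod p) with hcdef
  have hb : b ≠ 0 := by
    rw [hbdef, Ne, ZMod.intCast_zmod_eq_zero_iff_dvd, dvd_neg]; exact hr₁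
  have hc : c ≠ 0 := by
    rw [hcdef, Ne, ZMod.intCast_zmod_eq_zero_iff_dvd]; exact hrm
  have hr0 : ((r₀ : ℤ) : ZMod p) = 0 := (ZMod.intCast_zmod_eq_zero_iff_dvd _ _).mpr h₀
  -- step 1: reindex to ZMod p
  have step1 : (∑ y ∈ (Finset.range p).filter (fun y => Nat.gcd y p = 1),
      ∑ z ∈ (Finset.range p).filter (fun z => Nat.gcd z p = 1),
        (legendreSym p z : ℂ) *
          e ((((r₀ * (((z : ZMod p)⁻¹).val : ℤ)
              - r₁ * y * (((z : ZMod p)⁻¹).val : ℤ)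
              + r₂ * m * (((y : ZMod p)⁻¹).val : ℤ) : ℤ)) : ℝ) / p))
      = ∑ u ∈ t, ∑ v ∈ t, chi p v * psi p (b * u * v⁻¹ + c * u⁻¹) := by
    rw [← sum_range_coprime p (fun u => ∑ v ∈ t, chi p v * psi p (b * u * v⁻¹ + c * u⁻¹))]
    apply Finset.sum_congr rfl
    intro y _
    rw [← sum_range_coprime p
      (fun v => chi p v * psi p (b * ((y : ℕ) : ZMod p) * v⁻¹ + c * ((y : ℕ) : ZMod p)⁻¹))]
    apply Finset.sum_congr rfl
    intro z _
    have hleg : (legendreSym p (z : ℤ) : ℂ) = chi p ((z : ℕ) : ZMod p) := by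
      rw [← chi_legendre p (z : ℤ)]
      norm_cast
    have hpsi : e ((((r₀ * (((z : ZMod p)⁻¹).val : ℤ)
              - r₁ * y * (((z : ZMod p)⁻¹).val : ℤ)
              + r₂ * m * (((y : ZMod p)⁻¹).val : ℤ) : ℤ)) : ℝ) / p)
        = psi p (b * ((y : ℕ) : ZMod p) * ((z : ℕ) : ZMod p)⁻¹ + c * ((y : ℕ) : ZMod p)⁻¹) := by
      rw [← psi_int]
      congr 1
      rw [hbdef, hcdef]
      push_cast [hr0]
      simp only [ZMod.natCast_val, ZMod.cast_id]
      ring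
    rw [hleg, hpsi]
  -- step 2: inner sum evaluation
  have step2 : ∀ u ∈ t, ∑ v ∈ t, chi p v * psi p (b * u * v⁻¹ + c * u⁻¹)
      = (chi p b * chi p u * g) * psi p (c * u⁻¹) := by
    intro u hu
    have hu0 : u ≠ 0 := by
      simp only [ht, Finset.mem_filter, Finset.mem_univ, true_and] at hu; exact hu
    have hbu : b * u ≠ 0 := mul_ne_zero hb hu0
    calc ∑ v ∈ t, chi p v * psi p (b * u * v⁻¹ + c * u⁻¹)
        = ∑ v ∈ t, (chi p v * psi p ((b * u) * v⁻¹)) * psi p (c * u⁻¹) := by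
          apply Finset.sum_congr rfl; intro v _
          rw [AddChar.map_add_eq_mul, ← mul_assoc]
      _ = (∑ v ∈ t, chi p v * psi p ((b * u) * v⁻¹)) * psi p (c * u⁻¹) := by
          rw [Finset.sum_mul]
      _ = (∑ v ∈ t, chi p v * psi p ((b * u) * v)) * psi p (c * u⁻¹) := by
          rw [sum_inv_reindex p (fun w => psi p ((b * u) * w))]
      _ = (∑ v : ZMod p, chi p v * psi p ((b * u) * v)) * psi p (c * u⁻¹) := by
          rw [sum_extend p (fun w => psi p ((b * u) * w))]
      _ = (chi p (b * u) * g) * psi p (c * u⁻¹) := by rw [sum_chi_psi p hbu]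
      _ = (chi p b * chi p u * g) * psi p (c * u⁻¹) := by rw [map_mul]
  -- step 3: outer sum evaluation
  have step3 : ∑ u ∈ t, ∑ v ∈ t, chi p v * psi p (b * u * v⁻¹ + c * u⁻¹)
      = chi p b * chi p c * (chi p (-1) * p) := by
    calc ∑ u ∈ t, ∑ v ∈ t, chi p v * psi p (b * u * v⁻¹ + c * u⁻¹)
        = ∑ u ∈ t, (chi p b * chi p u * g) * psi p (c * u⁻¹) := Finset.sum_congr rfl step2
      _ = (chi p b * g) * ∑ u ∈ t, chi p u * psi p (c * u⁻¹) := by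
          rw [Finset.mul_sum]; apply Finset.sum_congr rfl; intro u _; ring
      _ = (chi p b * g) * ∑ u ∈ t, chi p u * psi p (c * u) := by
          rw [sum_inv_reindex p (fun w => psi p (c * w))]
      _ = (chi p b * g) * ∑ u : ZMod p, chi p u * psi p (c * u) := by
          rw [sum_extend p (fun w => psi p (c * w))]
      _ = (chi p b * g) * (chi p c * g) := by rw [sum_chi_psi p hc]
      _ = chi p b * chi p c * g ^ 2 := by ring
      _ = chi p b * chi p c * (chi p (-1) * p) := by
          rw [hg, gaussSum_sq (chi_ne_one p hp) (chi_quadratic p) (psi_prim p), ZMod.card]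
  have heps : ((if p % 4 = 1 then 1 else Complex.I) ^ 2 : ℂ) = chi p (-1) := by
    have hneg : ((-1 : ℤ) : ZMod p) = (-1 : ZMod p) := by push_cast; ring
    rw [← hneg, chi_legendre p (-1), legendreSym.at_neg_one hp2, ZMod.χ₄_nat_eq_if_mod_four]
    have h2 : p % 2 = 1 := Nat.odd_iff.mp hp
    rw [h2, if_neg (by norm_num : ¬ (1 : ℕ) = 0)]
    split_ifs with h4
    · norm_num
    · norm_num [Complex.I_sq]
  have first : (∑ y ∈ (Finset.range p).filter (fun y => Nat.gcd y p = 1),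
      ∑ z ∈ (Finset.range p).filter (fun z => Nat.gcd z p = 1),
        (legendreSym p z : ℂ) *
          e ((((r₀ * (((z : ZMod p)⁻¹).val : ℤ)
              - r₁ * y * (((z : ZMod p)⁻¹).val : ℤ)
              + r₂ * m * (((y : ZMod p)⁻¹).val : ℤ) : ℤ)) : ℝ) / p)) =
      (legendreSym p (r₂ * m) : ℂ) * (legendreSym p (-r₁) : ℂ)
        * (if p % 4 = 1 then 1 else Complex.I) ^ 2 * p := by
    rw [step1, step3, heps, ← chi_legendre p (-r₁), ← chi_legendre p (r₂ * m), ← hbdef, ← hcdef]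
    ring
  refine ⟨first, ?_⟩
  rw [first]
  have e1 : ‖(legendreSym p (r₂ * m) : ℂ)‖ = 1 := by
    rcases legendreSym.eq_one_or_neg_one p (a := r₂ * m)
      (by rw [Ne, ZMod.intCast_zmod_eq_zero_iff_dvd]; exact hrm) with h' | h' <;> rw [h'] <;> simp
  have e2 : ‖(legendreSym p (-r₁) : ℂ)‖ = 1 := by
    rcases legendreSym.eq_one_or_neg_one p (a := -r₁)
      (by rw [Ne, ZMod.intCast_zmod_eq_zero_iff_dvd, dvd_neg]; exact hr₁) with h' | h' <;>
      rw [h'] <;> simp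
  have e3 : ‖((if p % 4 = 1 then 1 else Complex.I) : ℂ) ^ 2‖ = 1 := by
    split_ifs <;> simp
  rw [norm_mul, norm_mul, norm_mul, e1, e2, e3, Complex.norm_natCast]
  ring
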